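/- Monotone saturation of the rate in dynamic-noise level: for fixed H₁, H₂, Q ⪰ 0 and σ_s² > 0, the function σ_d² ↦ log det((1/σ_s²)H₁H₂QH₂ᴴH₁ᴴ + (σ_d²/σ_s²)H₁H₁ᴴ + I) − log det((σ_d²/σ_s²)H₁H₁ᴴ + I) is nonincreasing in σ_d² ∈ [0,∞) and is bounded above by its value at σ_d² = 0, namely log det(I + (1/σ_s²)H₁H₂QH₂ᴴH₁ᴴ). -/

import Mathlib

open Matrix MeasureTheory Filter
open scoped ComplexOrder Matrix.Norms.L2Operator

section helpers
variable {n : Type*} [Fintype n] [DecidableEq n]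

lemma smul_posSemidef {X : Matrix n n ℂ} (hX : X.PosSemidef) {c : ℝ} (hc : 0 ≤ c) :
    ((c : ℂ) • X).PosSemidef := by
  constructor
  · unfold Matrix.IsHermitian
    rw [conjTranspose_smul, hX.1]
    congr 1
    simp [Complex.ext_iff]
  · intro x
    have := hX.2 x
    exact (hX.smul (Complex.zero_le_real.mpr hc)).2 x

lemma one_add_det_ge_one {X : Matrix n n ℂ} (hX : X.PosSemidef) :
    (1 : ℂ) ≤ (1 + X).det := by
  have key : (1 + X).det = ((∏ i, (1 + hX.1.eigenvalues i) : ℝ) : ℂ) := by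
    set U : Matrix n n ℂ := (hX.1.eigenvectorUnitary : Matrix n n ℂ)
    have hU : U * star U = 1 := mem_unitaryGroup_iff.mp hX.1.eigenvectorUnitary.2
    have h1 : 1 + X = U * (diagonal fun i => (1 : ℂ) + (hX.1.eigenvalues i : ℂ)) * star U := by
      calc 1 + X = U * star U + U * diagonal (RCLike.ofReal ∘ hX.1.eigenvalues) * star U := by
            rw [hU]; exact congrArg (1 + ·) hX.1.spectral_theorem
        _ = _ := by
            rw [Matrix.mul_assoc, Matrix.mul_assoc,
              show U * star U = U * ((1 : Matrix n n ℂ) * star U) by rw [Matrix.one_mul],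
              ← Matrix.mul_add, ← Matrix.add_mul]
            congr 2
            rw [← diagonal_one, diagonal_add]
            rfl
    rw [h1, det_mul_right_comm, hU, one_mul, det_diagonal]
    push_cast
    rfl
  rw [key]
  have : (1 : ℝ) ≤ ∏ i, (1 + hX.1.eigenvalues i) := by
    calc (1:ℝ) = ∏ _i : n, (1:ℝ) := by simp
      _ ≤ ∏ i, (1 + hX.1.eigenvalues i) :=
          Finset.prod_le_prod (fun i _ => zero_le_one)
            (fun i _ => by linarith [hX.eigenvalues_nonneg i])
  exact_mod_cast Complex.real_le_real.mpr this

lemma one_add_spectral {X : Matrix n n ℂ} (hX : X.PosSemidef) :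
    1 + X = (hX.1.eigenvectorUnitary : Matrix n n ℂ) *
      (diagonal fun i => (1 : ℂ) + (hX.1.eigenvalues i : ℂ)) *
      star (hX.1.eigenvectorUnitary : Matrix n n ℂ) := by
  set U : Matrix n n ℂ := (hX.1.eigenvectorUnitary : Matrix n n ℂ)
  have hU : U * star U = 1 := mem_unitaryGroup_iff.mp hX.1.eigenvectorUnitary.2
  calc 1 + X = U * star U + U * diagonal (RCLike.ofReal ∘ hX.1.eigenvalues) * star U := by
        rw [hU]; exact congrArg (1 + ·) hX.1.spectral_theorem
    _ = _ := by
        rw [Matrix.mul_assoc, Matrix.mul_assoc,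
          show U * star U = U * ((1 : Matrix n n ℂ) * star U) by rw [Matrix.one_mul],
          ← Matrix.mul_add, ← Matrix.add_mul]
        congr 2
        rw [← diagonal_one, diagonal_add]
        rfl

lemma det_factor {M : Matrix n n ℂ} (hM : M.PosDef) :
    ∃ S : Matrix n n ℂ,
      (∀ B : Matrix n n ℂ, (B + M).det = M.det * (1 + S⁻¹ * B * S⁻¹).det) ∧
      ∀ B : Matrix n n ℂ, B.PosSemidef → (S⁻¹ * B * S⁻¹).PosSemidef := by
  obtain ⟨S, hSpsd, hSS⟩ : ∃ S : Matrix n n ℂ, S.PosSemidef ∧ S * S = M :=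
    by open scoped MatrixOrder in exact ⟨CFC.sqrt M, (CFC.sqrt_nonneg M).posSemidef, CFC.sqrt_mul_sqrt_self M hM.posSemidef.nonneg⟩
  have hdet : S.det * S.det = M.det := by rw [← det_mul, hSS]
  have hMdet : M.det ≠ 0 := hM.det_pos.ne'
  have hSdet : IsUnit S.det :=
    isUnit_iff_ne_zero.mpr (fun h => hMdet (by rw [← hdet, h, zero_mul]))
  have h1 : S * S⁻¹ = 1 := mul_nonsing_inv S hSdet
  have h2 : S⁻¹ * S = 1 := nonsing_inv_mul S hSdet
  have hSiH : (S⁻¹)ᴴ = S⁻¹ := by rw [conjTranspose_nonsing_inv, hSpsd.1]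
  refine ⟨S, fun B => ?_, fun B hB => ?_⟩
  · have hconj : S * (S⁻¹ * B * S⁻¹) * S = B := by
      calc S * (S⁻¹ * B * S⁻¹) * S = ((S * S⁻¹) * B) * (S⁻¹ * S) := by
            simp only [Matrix.mul_assoc]
        _ = B := by rw [h1, h2, Matrix.one_mul, Matrix.mul_one]
    have e : B + M = S * (1 + S⁻¹ * B * S⁻¹) * S := by
      rw [Matrix.mul_add, Matrix.mul_one, Matrix.add_mul, hSS, hconj, add_comm]
    rw [e, det_mul, det_mul, ← hdet]; ring
  · have := hB.mul_mul_conjTranspose_same S⁻¹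
    rwa [hSiH] at this

lemma det_le_det_add {M : Matrix n n ℂ} (hM : M.PosDef) {E : Matrix n n ℂ}
    (hE : E.PosSemidef) : M.det ≤ (M + E).det := by
  obtain ⟨S, hfac, hpsd⟩ := det_factor hM
  rw [add_comm, hfac E]
  calc M.det = M.det * 1 := (mul_one _).symm
    _ ≤ M.det * (1 + S⁻¹ * E * S⁻¹).det :=
        mul_le_mul_of_nonneg_left (one_add_det_ge_one (hpsd E hE)) hM.det_pos.le

lemma one_sub_inv_posSemidef {X : Matrix n n ℂ} (hX : X.PosSemidef) :
    ((1 : Matrix n n ℂ) - (1 + X)⁻¹).PosSemidef := by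
  set U : Matrix n n ℂ := (hX.1.eigenvectorUnitary : Matrix n n ℂ)
  have hU : U * star U = 1 := mem_unitaryGroup_iff.mp hX.1.eigenvectorUnitary.2
  have hU' : star U * U = 1 := mem_unitaryGroup_iff'.mp hX.1.eigenvectorUnitary.2
  set d : n → ℂ := fun i => (1 : ℂ) + (hX.1.eigenvalues i : ℂ) with hd
  have hone : 1 + X = U * diagonal d * star U := one_add_spectral hX
  have heig : ∀ i, (0:ℝ) ≤ hX.1.eigenvalues i := hX.eigenvalues_nonneg
  have hdr : ∀ i, d i = ((1 + hX.1.eigenvalues i : ℝ) : ℂ) := by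
    intro i; simp [hd]
  have hdiag : diagonal d * diagonal (fun i => (d i)⁻¹) = 1 := by
    rw [diagonal_mul_diagonal, ← diagonal_one]
    refine congrArg diagonal (funext fun i => ?_)
    have hne : d i ≠ 0 := by
      rw [hdr i]
      exact_mod_cast ne_of_gt (by linarith [heig i] : (0:ℝ) < 1 + hX.1.eigenvalues i)
    exact mul_inv_cancel₀ hne
  have hinv : (1 + X)⁻¹ = U * diagonal (fun i => (d i)⁻¹) * star U := by
    apply inv_eq_right_inv
    calc (1 + X) * (U * diagonal (fun i => (d i)⁻¹) * star U)
        = U * diagonal d * (star U * U) * diagonal (fun i => (d i)⁻¹) * star U := by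
          rw [hone]; simp only [Matrix.mul_assoc]
      _ = 1 := by
          rw [hU', Matrix.mul_one, Matrix.mul_assoc U, hdiag, Matrix.mul_one, hU]
  have hone' : (1 : Matrix n n ℂ) = U * diagonal (fun _ => (1:ℂ)) * star U := by
    rw [diagonal_one, Matrix.mul_one, hU]
  have e : (1 : Matrix n n ℂ) - (1 + X)⁻¹
      = U * diagonal (fun i => 1 - (d i)⁻¹) * star U := by
    rw [hinv]
    conv_lhs => rw [hone']
    rw [← Matrix.sub_mul, ← Matrix.mul_sub, diagonal_sub]
  rw [e]
  have hψ : (0 : n → ℂ) ≤ fun i => 1 - (d i)⁻¹ := by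
    intro i
    simp only [Pi.zero_apply]
    show (0:ℂ) ≤ 1 - (d i)⁻¹
    have h1 : (1:ℝ) ≤ 1 + hX.1.eigenvalues i := by linarith [heig i]
    have h2 : (1 + hX.1.eigenvalues i : ℝ)⁻¹ ≤ 1 := by
      rw [inv_le_one₀ (by positivity)]; exact h1
    have : (1 : ℂ) - (d i)⁻¹ = ((1 - (1 + hX.1.eigenvalues i)⁻¹ : ℝ) : ℂ) := by
      rw [hdr i]; push_cast; ring
    rw [this]
    exact Complex.zero_le_real.mpr (by linarith)
  have := (Matrix.PosSemidef.diagonal hψ).mul_mul_conjTranspose_same U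
  rwa [← Matrix.star_eq_conjTranspose] at this

lemma det_one_add_add_le {X Y : Matrix n n ℂ} (hX : X.PosSemidef) (hY : Y.PosSemidef) :
    (1 + X + Y).det ≤ (1 + X).det * (1 + Y).det := by
  have hP : (1 + X).PosDef := Matrix.PosDef.one.add_posSemidef hX
  have hPdet : IsUnit (1 + X).det := isUnit_iff_ne_zero.mpr hP.det_pos.ne'
  obtain ⟨T, hTpsd, hTT⟩ : ∃ T : Matrix n n ℂ, T.PosSemidef ∧ T * T = Y :=
    by open scoped MatrixOrder in exact ⟨CFC.sqrt Y, (CFC.sqrt_nonneg Y).posSemidef, CFC.sqrt_mul_sqrt_self Y hY.nonneg⟩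
  set Z : Matrix n n ℂ := T * (1 + X)⁻¹ * T with hZdef
  have hZ : Z.PosSemidef := by
    have := hP.inv.posSemidef.mul_mul_conjTranspose_same T
    rwa [hTpsd.1] at this
  have step1 : (1 + X + Y).det = (1 + X).det * (1 + Z).det := by
    have e : 1 + X + Y = (1 + X) * (1 + (1 + X)⁻¹ * Y) := by
      rw [Matrix.mul_add, Matrix.mul_one, ← Matrix.mul_assoc,
        mul_nonsing_inv _ hPdet, Matrix.one_mul]
    rw [e, det_mul]
    congr 1
    rw [← hTT, ← Matrix.mul_assoc, det_one_add_mul_comm, hZdef, Matrix.mul_assoc]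
  have hYZ : (Y - Z).PosSemidef := by
    have hW := (one_sub_inv_posSemidef hX).mul_mul_conjTranspose_same T
    rw [hTpsd.1] at hW
    have e : T * (1 - (1 + X)⁻¹) * T = Y - Z := by
      rw [Matrix.mul_sub, Matrix.mul_one, Matrix.sub_mul, hTT]
    rwa [e] at hW
  have h2 : (1 + Z).det ≤ (1 + Y).det := by
    have e : 1 + Y = (1 + Z) + (Y - Z) := by abel
    rw [e]
    exact det_le_det_add (Matrix.PosDef.one.add_posSemidef hZ) hYZ
  rw [step1]
  exact mul_le_mul_of_nonneg_left h2 hP.det_pos.le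

lemma key_ineq {A M D : Matrix n n ℂ} (hA : A.PosSemidef) (hM : M.PosDef)
    (hD : D.PosSemidef) :
    (A + (M + D)).det * M.det ≤ (A + M).det * (M + D).det := by
  obtain ⟨S, hfac, hpsd⟩ := det_factor hM
  set A' : Matrix n n ℂ := S⁻¹ * A * S⁻¹ with hA'def
  set D' : Matrix n n ℂ := S⁻¹ * D * S⁻¹ with hD'def
  have hA' : A'.PosSemidef := hpsd A hA
  have hD' : D'.PosSemidef := hpsd D hD
  have e1 : (A + (M + D)).det = M.det * (1 + A' + D').det := by
    have h : A + (M + D) = (A + D) + M := by abel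
    rw [h, hfac]
    congr 2
    rw [Matrix.mul_add, Matrix.add_mul, ← add_assoc]
  have e2 : (A + M).det = M.det * (1 + A').det := hfac A
  have e3 : (M + D).det = M.det * (1 + D').det := by rw [add_comm]; exact hfac D
  rw [e1, e2, e3]
  have hsub := det_one_add_add_le hA' hD'
  have hM2 : 0 ≤ M.det * M.det := mul_nonneg hM.det_pos.le hM.det_pos.le
  calc M.det * (1 + A' + D').det * M.det
      = (M.det * M.det) * (1 + A' + D').det := by ring
    _ ≤ (M.det * M.det) * ((1 + A').det * (1 + D').det) :=
        mul_le_mul_of_nonneg_left hsub hM2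
    _ = M.det * (1 + A').det * (M.det * (1 + D').det) := by ring

lemma posdef_det_re {P : Matrix n n ℂ} (hP : P.PosDef) :
    0 < P.det.re ∧ P.det.im = 0 := by
  have h := hP.det_pos
  rw [Complex.lt_def] at h
  exact ⟨by simpa using h.1, by simpa using h.2.symm⟩

open MeasureTheory Filter
open scoped Matrix.Norms.L2Operator


end helpers

/-- The rate is nonincreasing in the dynamic-noise level and bounded by its value at 0. -/
theorem stmt_18 {nr nl nt : ℕ} (H₁ : Matrix (Fin nr) (Fin nl) ℂ) (H₂ : Matrix (Fin nl) (Fin nt) ℂ)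
    (Q : Matrix (Fin nt) (Fin nt) ℂ) (hQ : Q.PosSemidef) (σs2 : ℝ) (hs : 0 < σs2) :
    AntitoneOn (fun σd2 : ℝ =>
      Real.log (((σs2 : ℂ)⁻¹ • (H₁ * H₂ * Q * H₂ᴴ * H₁ᴴ) +
          ((σd2 / σs2 : ℝ) : ℂ) • (H₁ * H₁ᴴ) + 1).det.re)
        - Real.log ((((σd2 / σs2 : ℝ) : ℂ) • (H₁ * H₁ᴴ) + 1).det.re)) (Set.Ici 0) ∧
    ∀ σd2 : ℝ, 0 ≤ σd2 →
      Real.log (((σs2 : ℂ)⁻¹ • (H₁ * H₂ * Q * H₂ᴴ * H₁ᴴ) +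
          ((σd2 / σs2 : ℝ) : ℂ) • (H₁ * H₁ᴴ) + 1).det.re)
        - Real.log ((((σd2 / σs2 : ℝ) : ℂ) • (H₁ * H₁ᴴ) + 1).det.re) ≤
      Real.log (((1 : Matrix (Fin nr) (Fin nr) ℂ) +
        (σs2 : ℂ)⁻¹ • (H₁ * H₂ * Q * H₂ᴴ * H₁ᴴ)).det.re) := by
  have hGpsd : (H₁ * H₂ * Q * H₂ᴴ * H₁ᴴ).PosSemidef := by
    have h1 : ((H₁ * H₂) * Q * (H₁ * H₂)ᴴ).PosSemidef :=
      hQ.mul_mul_conjTranspose_same (H₁ * H₂)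
    have h2 : (H₁ * H₂) * Q * (H₁ * H₂)ᴴ = H₁ * H₂ * Q * H₂ᴴ * H₁ᴴ := by
      rw [conjTranspose_mul]; simp only [Matrix.mul_assoc]
    rwa [h2] at h1
  have hApsd : ((σs2 : ℂ)⁻¹ • (H₁ * H₂ * Q * H₂ᴴ * H₁ᴴ)).PosSemidef := by
    rw [show ((σs2:ℂ)⁻¹) = ((σs2⁻¹ : ℝ) : ℂ) by push_cast; ring]
    exact smul_posSemidef hGpsd (inv_nonneg.mpr hs.le)
  have hBpsd : (H₁ * H₁ᴴ).PosSemidef := posSemidef_self_mul_conjTranspose H₁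
  set A : Matrix (Fin nr) (Fin nr) ℂ := (σs2 : ℂ)⁻¹ • (H₁ * H₂ * Q * H₂ᴴ * H₁ᴴ) with hAdef
  set B : Matrix (Fin nr) (Fin nr) ℂ := H₁ * H₁ᴴ with hBdef
  have hant : AntitoneOn (fun σd2 : ℝ =>
      Real.log ((A + ((σd2 / σs2 : ℝ) : ℂ) • B + 1).det.re)
        - Real.log ((((σd2 / σs2 : ℝ) : ℂ) • B + 1).det.re)) (Set.Ici 0) := by
    intro s hs' t ht' hst
    simp only
    set a : ℝ := s / σs2 with hadef
    set b : ℝ := t / σs2 with hbdef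
    have ha : 0 ≤ a := div_nonneg hs' hs.le
    have hab : a ≤ b := by rw [hadef, hbdef]; gcongr
    set Ma : Matrix (Fin nr) (Fin nr) ℂ := ((a : ℝ) : ℂ) • B + 1 with hMadef
    set D : Matrix (Fin nr) (Fin nr) ℂ := ((b - a : ℝ) : ℂ) • B with hDdef
    have hMa : Ma.PosDef := Matrix.PosDef.posSemidef_add (smul_posSemidef hBpsd ha) Matrix.PosDef.one
    have hD : D.PosSemidef := smul_posSemidef hBpsd (by linarith)
    have hMD : Ma + D = ((b : ℝ) : ℂ) • B + 1 := by
      rw [hMadef, hDdef, add_right_comm, ← add_smul]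
      congr 2
      push_cast; ring
    have key := key_ineq hApsd hMa hD
    have hP1 : (A + (Ma + D)).PosDef := Matrix.PosDef.posSemidef_add hApsd (hMa.add_posSemidef hD)
    have hP3 : (A + Ma).PosDef := Matrix.PosDef.posSemidef_add hApsd hMa
    have hP4 : (Ma + D).PosDef := hMa.add_posSemidef hD
    obtain ⟨hr1, hi1⟩ := posdef_det_re hP1
    obtain ⟨hr2, hi2⟩ := posdef_det_re hMa
    obtain ⟨hr3, hi3⟩ := posdef_det_re hP3
    obtain ⟨hr4, hi4⟩ := posdef_det_re hP4
    have hre : (A + (Ma + D)).det.re * Ma.det.re ≤ (A + Ma).det.re * (Ma + D).det.re := by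
      have h := (Complex.le_def.mp key).1
      rw [Complex.mul_re, Complex.mul_re, hi1, hi2, hi3, hi4] at h
      simpa using h
    have hlog : Real.log ((A + (Ma + D)).det.re) - Real.log ((Ma + D).det.re) ≤
        Real.log ((A + Ma).det.re) - Real.log (Ma.det.re) := by
      have hl := Real.log_le_log (by positivity) hre
      rw [Real.log_mul hr1.ne' hr2.ne', Real.log_mul hr3.ne' hr4.ne'] at hl
      linarith
    have eb : A + ((b : ℝ) : ℂ) • B + 1 = A + (Ma + D) := by rw [hMD, add_assoc]
    have ea : A + ((a : ℝ) : ℂ) • B + 1 = A + Ma := by rw [hMadef, add_assoc]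
    rw [eb, ea, ← hMD]
    exact hlog
  refine ⟨hant, fun σd2 hσ => ?_⟩
  have h0 : (0:ℝ) ∈ Set.Ici (0:ℝ) := Set.mem_Ici.mpr le_rfl
  have happ := hant h0 hσ hσ
  simp only at happ
  refine le_trans happ ?_
  have e1 : ((0:ℝ) / σs2 : ℝ) = 0 := zero_div _
  rw [e1]
  norm_num
  rw [add_comm A 1]
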